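/- If both π^s(θ₀^r) < C' and π^s(θ₁^r) < C', then the epistemic signaling game with C < Δu^s₁₀(θ₀^s) admits no pooling PBE: there is no receiver strategy σ^r with σ^r(a₀|m₀,θ₀^r) = 1, σ^r(a₁|m₀,θ₁^r) = 1 satisfying γ^s(σ^r) = C' (ruling out pooling at m₀), and no receiver strategy with σ^r(a₀|m₁,θ₀^r) = 1, σ^r(a₁|m₁,θ₁^r) = 1 satisfying γ^s(σ^r) = −C' (ruling out pooling at m₁). -/
import Mathlib


/-- if π^s(θ₀^r) < C' and π^s(θ₁^r) < C' then there is no pooling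
PBE: no receiver strategy compatible with pooling at m₀ satisfies γ^s(σ^r) = C',
and none compatible with pooling at m₁ satisfies γ^s(σ^r) = −C'.
Here `rmθ = σ^r(a₁|m,θ^r)` and
γ^s(σ^r) = (r10 − r00)·π^s(θ₀^r) + (r11 − r01)·π^s(θ₁^r). -/
theorem stmt_6
    (πs0 πs1 C' : ℝ)
    (hπ0 : 0 ≤ πs0) (hπ1 : 0 ≤ πs1) (hπ : πs0 + πs1 = 1)
    (hC'0 : 0 < C') (hC'1 : C' < 1)
    (h0 : πs0 < C') (h1 : πs1 < C') :
    ∀ r00 r01 r10 r11 : ℝ,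
      0 ≤ r00 → r00 ≤ 1 → 0 ≤ r01 → r01 ≤ 1 →
      0 ≤ r10 → r10 ≤ 1 → 0 ≤ r11 → r11 ≤ 1 →
      ¬(r00 = 0 ∧ r01 = 1 ∧ (r10 - r00) * πs0 + (r11 - r01) * πs1 = C')
        ∧ ¬(r10 = 0 ∧ r11 = 1 ∧ (r10 - r00) * πs0 + (r11 - r01) * πs1 = -C') := by
  intro r00 r01 r10 r11 h00 h01 h02 h03 h04 h05 h06 h07
  constructor
  · rintro ⟨e0, e1, eg⟩
    subst e0; subst e1
    nlinarith [mul_nonneg h04 hπ0, mul_nonneg (sub_nonneg.2 h07) hπ1]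
  · rintro ⟨e0, e1, eg⟩
    subst e0; subst e1
    nlinarith [mul_nonneg h00 hπ0, mul_nonneg (sub_nonneg.2 h03) hπ1]
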